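/- Let H and H' be hypergraphs with at least one edge each and disjoint vertex sets, and let k be an integer with ν(H)+1 ≤ k ≤ ν(H)+ν(H'). Then the k-th square-free power of the edge ideal of the disjoint union decomposes as I(H ⊔ H')^{[k]} = J + K, where J = I(H)^{[ν(H)]}·I(H')^{[k−ν(H)]} and K = Σ_{l} I(H)^{[l]}·I(H')^{[k−l]} with l ranging over k−ν(H') ≤ l ≤ ν(H)−1, and moreover J ∩ K = I(H)^{[ν(H)]}·I(H')^{[k−ν(H)+1]}. -/

import Mathlib

open scoped Classical

variable {V : Type*} [DecidableEq V]

/-- A matching of a hypergraph with edge set `E`: a set of pairwise disjoint edges. -/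
def IsMatching (E M : Finset (Finset V)) : Prop :=
  M ⊆ E ∧ ∀ e ∈ M, ∀ f ∈ M, e ≠ f → Disjoint e f

/-- The matching number. -/
noncomputable def matchNum (E : Finset (Finset V)) : ℕ :=
  sSup {n : ℕ | ∃ M : Finset (Finset V), IsMatching E M ∧ M.card = n}

/-- The `k`-th square-free power of the edge ideal of the hypergraph with edge set `E`:
it is generated by the products `x_{E₁} ⋯ x_{E_k}` over all matchings `{E₁, ..., E_k}`
of size `k`.  For `k = 0` this is the unit ideal, matching the convention
`I^{[l]} = R` for `l ≤ 0` (`ℕ`-subtraction truncates negative superscripts to `0`). -/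
noncomputable def sqfreePower (K : Type*) [Field K] (E : Finset (Finset V)) (k : ℕ) :
    Ideal (MvPolynomial V K) :=
  Ideal.span {p : MvPolynomial V K | ∃ M : Finset (Finset V),
    IsMatching E M ∧ M.card = k ∧ p = ∏ e ∈ M, ∏ v ∈ e, MvPolynomial.X v}

section Aux
open MvPolynomial Pointwise

variable (K : Type*) [Field K]

noncomputable def mSpan (F : Set (Finset V)) : Ideal (MvPolynomial V K) :=
  Ideal.span {p : MvPolynomial V K | ∃ s ∈ F, p = ∏ v ∈ s, X v}

variable {K}

lemma expSum_apply (s : Finset V) (w : V) :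
    (∑ v ∈ s, Finsupp.single v (1:ℕ)) w = if w ∈ s then 1 else 0 := by
  classical
  rw [Finset.sum_apply']
  simp [Finsupp.single_apply]

lemma expSum_le {s : Finset V} {d : V →₀ ℕ} (h : s ⊆ d.support) :
    (∑ v ∈ s, Finsupp.single v (1:ℕ)) ≤ d := by
  rw [Finsupp.le_def]
  intro w
  rw [expSum_apply]
  split
  · exact Nat.one_le_iff_ne_zero.2 (Finsupp.mem_support_iff.1 (h ‹_›))
  · exact Nat.zero_le _

lemma prod_X_eq (s : Finset V) :
    (∏ v ∈ s, X v : MvPolynomial V K) = monomial (∑ v ∈ s, Finsupp.single v 1) 1 := by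
  classical
  induction s using Finset.induction with
  | empty => simp
  | @insert a s ha ih =>
    rw [Finset.prod_insert ha, ih, Finset.sum_insert ha, monomial_single_add, pow_one]

lemma mem_mSpan_iff {F : Set (Finset V)} {p : MvPolynomial V K} :
    p ∈ mSpan K F ↔ ∀ d ∈ p.support, ∃ s ∈ F, s ⊆ d.support := by
  classical
  constructor
  · intro hp
    induction hp using Submodule.span_induction with
    | mem x hx =>
      obtain ⟨s, hsF, rfl⟩ := hx
      intro d hd
      rw [prod_X_eq, support_monomial] at hd
      simp only [if_neg one_ne_zero, Finset.mem_singleton] at hd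
      subst hd
      refine ⟨s, hsF, fun v hv => ?_⟩
      rw [Finsupp.mem_support_iff, expSum_apply, if_pos hv]
      exact one_ne_zero
    | zero => simp
    | add x y hx hy ihx ihy =>
      intro d hd
      rcases Finset.mem_union.1 (support_add hd) with h | h
      exacts [ihx d h, ihy d h]
    | smul a x hx ih =>
      intro d hd
      have hd' : d ∈ a.support + x.support :=
        support_mul a x (by simpa [smul_eq_mul] using hd)
      obtain ⟨u, hu, w, hw, rfl⟩ := Finset.mem_add.1 hd'
      obtain ⟨s, hsF, hsub⟩ := ih w hw
      refine ⟨s, hsF, hsub.trans fun v hv => ?_⟩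
      rw [Finsupp.mem_support_iff] at hv ⊢
      simp only [Finsupp.add_apply]
      omega
  · intro h
    rw [p.as_sum]
    apply Ideal.sum_mem
    intro d hd
    obtain ⟨s, hsF, hsub⟩ := h d hd
    have hle := expSum_le hsub
    have heq : (monomial d) (coeff d p) =
        (∏ v ∈ s, X v) * monomial (d - ∑ v ∈ s, Finsupp.single v 1) (coeff d p) := by
      rw [prod_X_eq, monomial_mul, one_mul, add_tsub_cancel_of_le hle]
    rw [heq]
    exact Ideal.mul_mem_right _ _ (Ideal.subset_span ⟨s, hsF, rfl⟩)

lemma mSpan_mono {F G : Set (Finset V)} (h : F ⊆ G) : mSpan K F ≤ mSpan K G :=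
  Ideal.span_mono (fun p ⟨s, hs, hp⟩ => ⟨s, h hs, hp⟩)

lemma prod_X_mem {F : Set (Finset V)} {s t : Finset V} (ht : t ∈ F) (hts : t ⊆ s) :
    (∏ v ∈ s, X v : MvPolynomial V K) ∈ mSpan K F := by
  rw [← Finset.prod_sdiff hts]
  exact Ideal.mul_mem_left _ _ (Ideal.subset_span ⟨t, ht, rfl⟩)

lemma mSpan_mul {F G : Set (Finset V)} (h : ∀ s ∈ F, ∀ t ∈ G, Disjoint s t) :
    mSpan K F * mSpan K G = mSpan K (Set.image2 (· ∪ ·) F G) := by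
  rw [mSpan, mSpan, Ideal.span_mul_span']
  congr 1
  ext p
  constructor
  · rintro ⟨a, ⟨s, hs, rfl⟩, b, ⟨t, ht, rfl⟩, rfl⟩
    exact ⟨s ∪ t, ⟨s, hs, t, ht, rfl⟩, (Finset.prod_union (h s hs t ht)).symm⟩
  · rintro ⟨u, ⟨s, hs, t, ht, rfl⟩, rfl⟩
    exact ⟨_, ⟨s, hs, rfl⟩, _, ⟨t, ht, rfl⟩, (Finset.prod_union (h s hs t ht)).symm⟩

def verts (M : Finset (Finset V)) : Finset V := M.biUnion id

lemma verts_union (M N : Finset (Finset V)) : verts (M ∪ N) = verts M ∪ verts N := by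
  ext v
  simp only [verts, Finset.mem_biUnion, Finset.mem_union, id_eq]
  constructor
  · rintro ⟨e, he | he, hv⟩
    exacts [Or.inl ⟨e, he, hv⟩, Or.inr ⟨e, he, hv⟩]
  · rintro (⟨e, he, hv⟩ | ⟨e, he, hv⟩)
    exacts [⟨e, Or.inl he, hv⟩, ⟨e, Or.inr he, hv⟩]

lemma verts_mono {M N : Finset (Finset V)} (h : M ⊆ N) : verts M ⊆ verts N := by
  intro v hv
  simp only [verts, Finset.mem_biUnion, id] at hv ⊢
  obtain ⟨e, he, hve⟩ := hv
  exact ⟨e, h he, hve⟩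

variable (K) in
lemma sqfreePower_eq (E : Finset (Finset V)) (k : ℕ) :
    sqfreePower K E k
      = mSpan K {s | ∃ M, IsMatching E M ∧ M.card = k ∧ s = verts M} := by
  unfold sqfreePower mSpan
  congr 1
  ext p
  constructor
  · rintro ⟨M, hM, hcard, rfl⟩
    refine ⟨verts M, ⟨M, hM, hcard, rfl⟩, ?_⟩
    exact (Finset.prod_biUnion fun e he f hf hne => hM.2 e he f hf hne).symm
  · rintro ⟨s, ⟨M, hM, hcard, rfl⟩, rfl⟩
    refine ⟨M, hM, hcard, ?_⟩
    exact Finset.prod_biUnion fun e he f hf hne => hM.2 e he f hf hne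

lemma matchNum_bddAbove (E : Finset (Finset V)) :
    BddAbove {n : ℕ | ∃ M, IsMatching E M ∧ M.card = n} := by
  refine ⟨E.card, fun n hn => ?_⟩
  obtain ⟨M, hM, rfl⟩ := hn
  exact Finset.card_le_card hM.1

lemma card_le_matchNum {E M : Finset (Finset V)} (h : IsMatching E M) :
    M.card ≤ matchNum E :=
  le_csSup (matchNum_bddAbove E) ⟨M, h, rfl⟩

lemma one_le_matchNum {E : Finset (Finset V)} (hE : E.Nonempty) : 1 ≤ matchNum E := by
  obtain ⟨e, he⟩ := hE
  have h : IsMatching E {e} := ⟨Finset.singleton_subset_iff.2 he, by simp⟩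
  simpa using card_le_matchNum h

lemma isMatching_subset {E M N : Finset (Finset V)} (h : IsMatching E M) (hNM : N ⊆ M) :
    IsMatching E N :=
  ⟨hNM.trans h.1, fun e he f hf => h.2 e (hNM he) f (hNM hf)⟩

lemma ideal_sum_le {ι R : Type*} [CommRing R] {s : Finset ι} {T : ι → Ideal R} {I : Ideal R}
    (h : ∀ l ∈ s, T l ≤ I) : (∑ l ∈ s, T l) ≤ I := by
  classical
  induction s using Finset.induction with
  | empty => simp only [Finset.sum_empty]; exact bot_le
  | insert _ _ hx ih =>
    rw [Finset.sum_insert hx, Submodule.add_eq_sup]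
    exact sup_le (h _ (Finset.mem_insert_self _ _))
      (ih fun l hl => h l (Finset.mem_insert_of_mem hl))

end Aux

/-- Betti splitting decomposition of a square-free power of the edge ideal of a disjoint
union of hypergraphs: `I(H ⊔ H')^{[k]} = J + K` with
`J = I(H)^{[ν(H)]}·I(H')^{[k-ν(H)]}`, `K = ∑_{l} I(H)^{[l]}·I(H')^{[k-l]}` for
`k - ν(H') ≤ l ≤ ν(H) - 1`, and moreover
`J ∩ K = I(H)^{[ν(H)]}·I(H')^{[k-ν(H)+1]}`. -/
theorem sqfreePower_disjUnion_betti_splitting (K : Type*) [Field K]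
    (E₁ E₂ : Finset (Finset V))
    (hE₁ : E₁.Nonempty) (hE₂ : E₂.Nonempty)
    (hne₁ : ∀ e ∈ E₁, e.Nonempty) (hne₂ : ∀ e ∈ E₂, e.Nonempty)
    (hsimple₁ : ∀ e ∈ E₁, ∀ f ∈ E₁, e ⊆ f → e = f)
    (hsimple₂ : ∀ e ∈ E₂, ∀ f ∈ E₂, e ⊆ f → e = f)
    (hdisj : ∀ e ∈ E₁, ∀ f ∈ E₂, Disjoint e f)
    (k : ℕ) (hk1 : matchNum E₁ + 1 ≤ k) (hk2 : k ≤ matchNum E₁ + matchNum E₂) :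
    sqfreePower K (E₁ ∪ E₂) k =
      sqfreePower K E₁ (matchNum E₁) * sqfreePower K E₂ (k - matchNum E₁) +
      ∑ l ∈ Finset.Icc (k - matchNum E₂) (matchNum E₁ - 1),
        sqfreePower K E₁ l * sqfreePower K E₂ (k - l) ∧
    (sqfreePower K E₁ (matchNum E₁) * sqfreePower K E₂ (k - matchNum E₁)) ⊓
      (∑ l ∈ Finset.Icc (k - matchNum E₂) (matchNum E₁ - 1),
        sqfreePower K E₁ l * sqfreePower K E₂ (k - l)) =
      sqfreePower K E₁ (matchNum E₁) * sqfreePower K E₂ (k - matchNum E₁ + 1) := by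
  classical
  set ν₁ := matchNum E₁ with hν₁
  set ν₂ := matchNum E₂ with hν₂
  have hν₁pos : 1 ≤ ν₁ := one_le_matchNum hE₁
  have hν₂pos : 1 ≤ ν₂ := one_le_matchNum hE₂
  -- families of vertex sets
  set F₁ : ℕ → Set (Finset V) :=
    fun l => {s | ∃ M, IsMatching E₁ M ∧ M.card = l ∧ s = verts M} with hF₁
  set F₂ : ℕ → Set (Finset V) :=
    fun m => {s | ∃ M, IsMatching E₂ M ∧ M.card = m ∧ s = verts M} with hF₂
  set FU : Set (Finset V) :=
    {s | ∃ M, IsMatching (E₁ ∪ E₂) M ∧ M.card = k ∧ s = verts M} with hFU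
  have hvdisj : ∀ {M₁ M₂ : Finset (Finset V)}, M₁ ⊆ E₁ → M₂ ⊆ E₂ →
      Disjoint (verts M₁) (verts M₂) := by
    intro M₁ M₂ h1 h2
    rw [verts, Finset.disjoint_biUnion_left]
    intro e he
    rw [verts, Finset.disjoint_biUnion_right]
    intro f hf
    exact hdisj e (h1 he) f (h2 hf)
  have hprod : ∀ l m : ℕ, sqfreePower K E₁ l * sqfreePower K E₂ m
      = mSpan K (Set.image2 (· ∪ ·) (F₁ l) (F₂ m)) := by
    intro l m
    rw [sqfreePower_eq, sqfreePower_eq, mSpan_mul]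
    rintro s ⟨M₁, hM₁, -, rfl⟩ t ⟨M₂, hM₂, -, rfl⟩
    exact hvdisj hM₁.1 hM₂.1
  -- combining matchings
  have hcomb : ∀ {M₁ M₂ : Finset (Finset V)}, IsMatching E₁ M₁ → IsMatching E₂ M₂ →
      IsMatching (E₁ ∪ E₂) (M₁ ∪ M₂) ∧ (M₁ ∪ M₂).card = M₁.card + M₂.card := by
    intro M₁ M₂ h1 h2
    have hMd : Disjoint M₁ M₂ := by
      rw [Finset.disjoint_left]
      intro e he1 he2
      have := hdisj e (h1.1 he1) e (h2.1 he2)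
      rw [disjoint_self] at this
      exact ((hne₁ e (h1.1 he1)).ne_empty (by simpa using this)).elim
    refine ⟨⟨Finset.union_subset_union h1.1 h2.1, ?_⟩, Finset.card_union_of_disjoint hMd⟩
    intro e he f hf hne
    rcases Finset.mem_union.1 he with he | he <;> rcases Finset.mem_union.1 hf with hf | hf
    · exact h1.2 e he f hf hne
    · exact hdisj e (h1.1 he) f (h2.1 hf)
    · exact (hdisj f (h1.1 hf) e (h2.1 he)).symm
    · exact h2.2 e he f hf hne
  -- each product term is inside the big one
  have hT_le_LHS : ∀ l : ℕ, l ≤ k →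
      mSpan K (Set.image2 (· ∪ ·) (F₁ l) (F₂ (k - l))) ≤ mSpan K FU := by
    intro l hlk
    rw [mSpan, Ideal.span_le]
    rintro p ⟨u, ⟨s, ⟨M₁, hM₁, hc₁, rfl⟩, t, ⟨M₂, hM₂, hc₂, rfl⟩, rfl⟩, rfl⟩
    obtain ⟨hMm, hMc⟩ := hcomb hM₁ hM₂
    refine Ideal.subset_span ⟨verts M₁ ∪ verts M₂, ⟨M₁ ∪ M₂, hMm, ?_, (verts_union _ _).symm⟩, rfl⟩
    rw [hMc]; omega
  refine ⟨?_, ?_⟩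
  · -- first statement
    rw [sqfreePower_eq]
    simp only [hprod]
    apply le_antisymm
    · rw [mSpan, Ideal.span_le]
      rintro p ⟨s, ⟨M, hM, hcard, rfl⟩, rfl⟩
      -- split M
      set M₁ : Finset (Finset V) := M.filter (· ∈ E₁) with hM₁def
      set M₂ : Finset (Finset V) := M \ M₁ with hM₂def
      have hM₁sub : M₁ ⊆ M := Finset.filter_subset _ _
      have hm₁ : IsMatching E₁ M₁ :=
        ⟨fun e he => (Finset.mem_filter.1 he).2,
         fun e he f hf => hM.2 e (hM₁sub he) f (hM₁sub hf)⟩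
      have hm₂ : IsMatching E₂ M₂ := by
        refine ⟨fun e he => ?_, fun e he f hf =>
          hM.2 e ((Finset.sdiff_subset) he) f ((Finset.sdiff_subset) hf)⟩
        rw [hM₂def, Finset.mem_sdiff] at he
        obtain ⟨heM, heM₁⟩ := he
        rcases Finset.mem_union.1 (hM.1 heM) with h | h
        · exact absurd (Finset.mem_filter.2 ⟨heM, h⟩) heM₁
        · exact h
      have hMsplit : M₁ ∪ M₂ = M := Finset.union_sdiff_of_subset hM₁sub
      have hc₁ : M₁.card ≤ k := hcard ▸ Finset.card_le_card hM₁sub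
      have hc₂ : M₂.card = k - M₁.card := by
        rw [hM₂def, Finset.card_sdiff_of_subset hM₁sub, hcard]
      have hl₁ : M₁.card ≤ ν₁ := card_le_matchNum hm₁
      have hl₂ : M₂.card ≤ ν₂ := card_le_matchNum hm₂
      have hvsplit : verts M = verts M₁ ∪ verts M₂ := by
        rw [← hMsplit, verts_union]
      have hgen : (∏ v ∈ verts M, MvPolynomial.X v : MvPolynomial V K) ∈
          mSpan K (Set.image2 (· ∪ ·) (F₁ M₁.card) (F₂ (k - M₁.card))) := by
        apply Ideal.subset_span
        refine ⟨verts M₁ ∪ verts M₂, ⟨verts M₁, ⟨M₁, hm₁, rfl, rfl⟩,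
          verts M₂, ⟨M₂, hm₂, hc₂, rfl⟩, rfl⟩, by rw [hvsplit]⟩
      rcases eq_or_lt_of_le hl₁ with heq | hlt
      · rw [Submodule.add_eq_sup]
        exact Submodule.mem_sup_left (heq ▸ hgen)
      · rw [Submodule.add_eq_sup]
        refine Submodule.mem_sup_right ?_
        have hmem : M₁.card ∈ Finset.Icc (k - ν₂) (ν₁ - 1) := by
          rw [Finset.mem_Icc]; omega
        exact Finset.single_le_sum
          (f := fun l => mSpan K (Set.image2 (· ∪ ·) (F₁ l) (F₂ (k - l))))
          (fun i _ => zero_le) hmem hgen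
    · rw [Submodule.add_eq_sup]
      refine sup_le (hT_le_LHS ν₁ (by omega)) (ideal_sum_le fun l hl => ?_)
      rw [Finset.mem_Icc] at hl
      exact hT_le_LHS l (by omega)
  · -- second statement
    simp only [hprod]
    apply le_antisymm
    · -- intersection ≤ product
      intro p hp
      rw [Submodule.mem_inf] at hp
      obtain ⟨hpJ, hpK⟩ := hp
      have hpK' : p ∈ mSpan K {s | ∃ l ∈ Finset.Icc (k - ν₂) (ν₁ - 1),
          s ∈ Set.image2 (· ∪ ·) (F₁ l) (F₂ (k - l))} := by
        refine ideal_sum_le (fun l hl => mSpan_mono ?_) hpK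
        exact fun s hs => ⟨l, hl, hs⟩
      rw [mem_mSpan_iff] at hpJ hpK' ⊢
      intro d hd
      obtain ⟨s, ⟨s₁, ⟨M₁, hM₁, hc₁, rfl⟩, t₁, -, rfl⟩, hsub1⟩ := hpJ d hd
      obtain ⟨t, ⟨l, hl, s₂, -, t₂, ⟨N₂, hN₂, hc₂, rfl⟩, rfl⟩, hsub2⟩ := hpK' d hd
      rw [Finset.mem_Icc] at hl
      have hcardN₂ : k - ν₁ + 1 ≤ N₂.card := by omega
      obtain ⟨N₂', hN₂'sub, hN₂'card⟩ := Finset.exists_subset_card_eq (s := N₂) hcardN₂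
      refine ⟨verts M₁ ∪ verts N₂',
        ⟨verts M₁, ⟨M₁, hM₁, hc₁, rfl⟩,
         verts N₂', ⟨N₂', isMatching_subset hN₂ hN₂'sub, hN₂'card, rfl⟩, rfl⟩, ?_⟩
      refine Finset.union_subset ?_ ?_
      · exact (Finset.subset_union_left).trans hsub1
      · exact (verts_mono hN₂'sub).trans ((Finset.subset_union_right).trans hsub2)
    · -- product ≤ intersection
      refine le_inf ?_ ?_
      · -- ≤ J
        rw [mSpan, Ideal.span_le]
        rintro p ⟨u, ⟨s, ⟨M₁, hM₁, hc₁, rfl⟩, t, ⟨M₂, hM₂, hc₂, rfl⟩, rfl⟩, rfl⟩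
        obtain ⟨M₂', hM₂'sub, hM₂'card⟩ :=
          Finset.exists_subset_card_eq (s := M₂) (n := k - ν₁) (by omega)
        refine prod_X_mem (t := verts M₁ ∪ verts M₂')
          ⟨verts M₁, ⟨M₁, hM₁, hc₁, rfl⟩,
           verts M₂', ⟨M₂', isMatching_subset hM₂ hM₂'sub, hM₂'card, rfl⟩, rfl⟩ ?_
        exact Finset.union_subset_union (le_refl _) (verts_mono hM₂'sub)
      · -- ≤ K
        by_cases hcase : k = ν₁ + ν₂
        · -- the product ideal is ⊥
          have hempty : Set.image2 (· ∪ ·) (F₁ ν₁) (F₂ (k - ν₁ + 1)) = ∅ := by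
            rw [Set.eq_empty_iff_forall_notMem]
            rintro u ⟨s, -, t, ⟨M₂, hM₂, hc₂, rfl⟩, rfl⟩
            have := card_le_matchNum hM₂
            omega
          have : mSpan K (Set.image2 (· ∪ ·) (F₁ ν₁) (F₂ (k - ν₁ + 1))) = ⊥ := by
            rw [hempty, mSpan]
            convert Ideal.span_empty
            rw [Set.eq_empty_iff_forall_notMem]
            rintro p ⟨s, hs, -⟩
            exact hs
          rw [this]
          exact bot_le
        · have hl₀ : ν₁ - 1 ∈ Finset.Icc (k - ν₂) (ν₁ - 1) := by
            rw [Finset.mem_Icc]; omega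
          refine le_trans ?_ (Finset.single_le_sum
            (f := fun l => mSpan K (Set.image2 (· ∪ ·) (F₁ l) (F₂ (k - l))))
            (fun i _ => zero_le) hl₀)
          rw [mSpan, Ideal.span_le]
          rintro p ⟨u, ⟨s, ⟨M₁, hM₁, hc₁, rfl⟩, t, ⟨M₂, hM₂, hc₂, rfl⟩, rfl⟩, rfl⟩
          obtain ⟨M₁', hM₁'sub, hM₁'card⟩ :=
            Finset.exists_subset_card_eq (s := M₁) (n := ν₁ - 1) (by omega)
          refine prod_X_mem (t := verts M₁' ∪ verts M₂)
            ⟨verts M₁', ⟨M₁', isMatching_subset hM₁ hM₁'sub, hM₁'card, rfl⟩,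
             verts M₂, ⟨M₂, hM₂, by omega, rfl⟩, rfl⟩ ?_
          exact Finset.union_subset_union (verts_mono hM₁'sub) (le_refl _)
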